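/- arXiv:1201.3441 — 2 statements merged into one kernel-verified Lean document; each statement's English description precedes it below -/
import Mathlib

section
/- Let p₁, …, p_s be pairwise distinct primes. Then the variety 𝔏_{p₁,…,p_s} = var(N_{0,p₁}, …, N_{0,p_s}) is graph-determined: for all finite rings R, S ∈ 𝔏_{p₁,…,p_s}, if Γ(R) ≅ Γ(S) then R ≅ S. -/
/-- An element of a ring is a (one-sided or two-sided) zero-divisor: it is nonzero and
kills some nonzero element on the left or on the right. -/
def IsZD {R : Type*} [NonUnitalNonAssocRing R] (x : R) : Prop :=
  x ≠ 0 ∧ ∃ y : R, y ≠ 0 ∧ (x * y = 0 ∨ y * x = 0)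

/-- The zero-divisor graph `Γ(R)` of a ring `R`: vertices are the nonzero zero-divisors,
and distinct vertices `x`, `y` are adjacent iff `x*y = 0` or `y*x = 0`. -/
def zdvGraph (R : Type*) [NonUnitalNonAssocRing R] :
    SimpleGraph {x : R // IsZD x} where
  Adj a b := a ≠ b ∧ ((a : R) * (b : R) = 0 ∨ (b : R) * (a : R) = 0)
  symm := by
    refine ⟨?_⟩
    rintro a b ⟨hne, h⟩
    exact ⟨hne.symm, h.symm⟩
  loopless := by
    refine ⟨?_⟩
    rintro a ⟨hne, -⟩
    exact hne rfl

/-- A variety of (associative, not necessarily unital or commutative) rings: a class of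
rings closed under isomorphisms, subrings, homomorphic images and arbitrary products. -/
structure RingVariety : Type 1 where
  mem : ∀ (R : Type) [NonUnitalRing R], Prop
  closed_iso : ∀ (R S : Type) [NonUnitalRing R] [NonUnitalRing S],
    (R ≃+* S) → mem R → mem S
  closed_subring : ∀ (R : Type) [NonUnitalRing R] (S : NonUnitalSubring R),
    mem R → mem S
  closed_image : ∀ (R S : Type) [NonUnitalRing R] [NonUnitalRing S] (f : R →ₙ+* S),
    Function.Surjective f → mem R → mem S
  closed_prod : ∀ (ι : Type) (R : ι → Type) [∀ i, NonUnitalRing (R i)],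
    (∀ i, mem (R i)) → mem (∀ i, R i)

/-- A variety is graph-determined if any two finite rings in it with isomorphic
zero-divisor graphs are isomorphic. -/
def GraphDetermined (M : RingVariety) : Prop :=
  ∀ (R S : Type) [NonUnitalRing R] [NonUnitalRing S], Finite R → Finite S →
    M.mem R → M.mem S →
    Nonempty (zdvGraph R ≃g zdvGraph S) → Nonempty (R ≃+* S)

/-- The null ring on an abelian group `A`: all products are zero. -/
def NullRing (A : Type*) := A

instance {A : Type*} [AddCommGroup A] : NonUnitalRing (NullRing A) :=
  { (inferInstanceAs (AddCommGroup A) : AddCommGroup A) with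
    mul := fun _ _ => (0 : A)
    left_distrib := fun _ _ _ => (add_zero (0 : A)).symm
    right_distrib := fun _ _ _ => (add_zero (0 : A)).symm
    zero_mul := fun _ => rfl
    mul_zero := fun _ => rfl
    mul_assoc := fun _ _ _ => rfl }

/-- Membership in `𝔏_{p₁,…,p_s} = var(N_{0,p₁}, …, N_{0,p_s})`, the smallest variety
containing the null rings on `ℤ/pᵢℤ`: a ring belongs to it iff it belongs to every
variety containing all these null rings. -/
def MemVarNulls (s : ℕ) (ps : Fin s → ℕ) (R : Type) [NonUnitalRing R] : Prop :=
  ∀ N : RingVariety, (∀ i, N.mem (NullRing (ZMod (ps i)))) → N.mem R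


section Aux

/-- The variety of rings with zero multiplication and additive exponent dividing `n`. -/
def nullVariety (n : ℕ) : RingVariety where
  mem R _ := (∀ x y : R, x * y = 0) ∧ ∀ x : R, n • x = 0
  closed_iso := by
    intro R S _ _ e h
    refine ⟨fun x y => ?_, fun x => ?_⟩
    · rw [← e.apply_symm_apply x, ← e.apply_symm_apply y, ← map_mul, h.1, map_zero]
    · rw [← e.apply_symm_apply x, ← map_nsmul, h.2, map_zero]
  closed_subring := by
    intro R _ S h
    refine ⟨fun x y => Subtype.ext ?_, fun x => Subtype.ext ?_⟩
    · simpa using h.1 x y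
    · simpa using h.2 (x : R)
  closed_image := by
    intro R S _ _ f hf h
    refine ⟨fun x y => ?_, fun x => ?_⟩
    · obtain ⟨a, rfl⟩ := hf x
      obtain ⟨b, rfl⟩ := hf y
      rw [← map_mul, h.1, map_zero]
    · obtain ⟨a, rfl⟩ := hf x
      rw [← map_nsmul, h.2, map_zero]
  closed_prod := by
    intro ι R _ h
    exact ⟨fun x y => funext fun i => (h i).1 _ _, fun x => funext fun i => (h i).2 _⟩

lemma nullring_mem (s : ℕ) (ps : Fin s → ℕ) (i : Fin s) :
    (nullVariety (∏ j, ps j)).mem (NullRing (ZMod (ps i))) := by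
  constructor
  · intro x y; rfl
  · intro x
    have key : ∀ y : ZMod (ps i), (∏ j, ps j) • y = 0 := by
      intro y
      rw [nsmul_eq_mul]
      rw [show ((∏ j, ps j : ℕ) : ZMod (ps i)) = 0 from
        (ZMod.natCast_eq_zero_iff _ _).mpr (Finset.dvd_prod_of_mem _ (Finset.mem_univ i))]
      exact zero_mul y
    exact key x

lemma vs_aux (p : ℕ) [Fact p.Prime] (V : Type*) [AddCommGroup V] [Finite V]
    [Module (ZMod p) V] :
    ∃ d : ℕ, Nat.card V = p ^ d ∧ Nonempty (V ≃+ (Fin d → ZMod p)) := by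
  let b := Module.finBasis (ZMod p) V
  refine ⟨Module.finrank (ZMod p) V, ?_, ⟨b.equivFun.toAddEquiv⟩⟩
  have := Nat.card_congr b.equivFun.toEquiv
  simp [this, Nat.card_pi, Nat.card_zmod]

lemma vs_equiv (p : ℕ) (hp : p.Prime) (V : Type*) [AddCommGroup V] [Finite V]
    (h : ∀ x : V, p • x = 0) :
    ∃ d : ℕ, Nat.card V = p ^ d ∧ Nonempty (V ≃+ (Fin d → ZMod p)) := by
  haveI := Fact.mk hp
  letI m : Module (ZMod p) V := AddCommGroup.zmodModule h
  exact vs_aux p V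

lemma decomp_step (s : ℕ) (ps : Fin s → ℕ) (hprime : ∀ i, (ps i).Prime)
    (hdist : ∀ i j, i ≠ j → ps i ≠ ps j)
    (M : Type) [AddCommGroup M] [Finite M]
    (htor : ∀ x : M, (∏ i, ps i) • x = 0) :
    Nonempty (M ≃+ ∀ i, Submodule.torsionBy ℤ M ((ps i : ℤ))) := by
  classical
  have hcop : ((Finset.univ : Finset (Fin s)) : Set (Fin s)).Pairwise
      (Function.onFun IsCoprime fun i => ((ps i : ℤ))) := by
    intro i _ j _ hij
    exact Int.isCoprime_iff_gcd_eq_one.mpr <| by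
      simpa [Int.gcd_natCast_natCast] using
        (Nat.coprime_primes (hprime i) (hprime j)).mpr (hdist i j hij)
  have hM : Module.IsTorsionBy ℤ M (∏ i ∈ Finset.univ, (ps i : ℤ)) := by
    intro x
    rw [← Nat.cast_prod, Nat.cast_smul_eq_nsmul]
    exact htor x
  have internal := Submodule.torsionBy_isInternal (M := M) (S := Finset.univ) hcop hM
  let e1 := LinearEquiv.ofBijective (DirectSum.coeLinearMap
    (fun i : (Finset.univ : Finset (Fin s)) => Submodule.torsionBy ℤ M ((ps i : ℤ)))) internal
  let e2 := DirectSum.linearEquivFunOnFintype ℤ (Finset.univ : Finset (Fin s))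
    (fun i : (Finset.univ : Finset (Fin s)) => Submodule.torsionBy ℤ M ((ps i : ℤ)))
  let e3 := LinearEquiv.piCongrLeft ℤ (fun i : Fin s => Submodule.torsionBy ℤ M ((ps i : ℤ)))
    (Equiv.subtypeUnivEquiv (fun x => Finset.mem_univ x))
  exact ⟨(e1.symm.trans (e2.trans e3)).toAddEquiv⟩

/-- A finite abelian group annihilated by a squarefree product of distinct primes is
determined up to isomorphism by its cardinality. -/
lemma decomp (s : ℕ) (ps : Fin s → ℕ) (hprime : ∀ i, (ps i).Prime)
    (hdist : ∀ i j, i ≠ j → ps i ≠ ps j)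
    (M : Type) [AddCommGroup M] [Finite M]
    (htor : ∀ x : M, (∏ i, ps i) • x = 0) :
    Nonempty (M ≃+ ∀ i, (Fin ((Nat.card M).factorization (ps i)) → ZMod (ps i))) := by
  classical
  obtain ⟨e0⟩ := decomp_step s ps hprime hdist M htor
  have hcomp : ∀ i, ∃ d : ℕ, Nat.card (Submodule.torsionBy ℤ M ((ps i : ℤ))) = ps i ^ d ∧
      Nonempty ((Submodule.torsionBy ℤ M ((ps i : ℤ))) ≃+ (Fin d → ZMod (ps i))) := by
    intro i
    apply vs_equiv (ps i) (hprime i)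
    intro x
    have := Submodule.smul_torsionBy (R := ℤ) (ps i : ℤ) x
    rwa [Nat.cast_smul_eq_nsmul] at this
  choose d hcard hequiv using hcomp
  have hcardM : Nat.card M = ∏ i, ps i ^ d i := by
    rw [Nat.card_congr e0.toEquiv, Nat.card_pi]
    exact Finset.prod_congr rfl fun i _ => hcard i
  have hfact : ∀ i, (Nat.card M).factorization (ps i) = d i := by
    intro j
    rw [hcardM, Nat.factorization_prod (fun i _ => pow_ne_zero _ (hprime i).pos.ne')]
    rw [Finset.sum_apply']
    have : ∀ i, ((ps i ^ d i).factorization) (ps j) = if i = j then d j else 0 := by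
      intro i
      rw [(hprime i).factorization_pow, Finsupp.single_apply]
      by_cases h : i = j
      · subst h; simp
      · simp [h, hdist i j h]
    simp only [this]
    simp
  refine ⟨e0.trans (AddEquiv.piCongrRight fun i => ?_)⟩
  rw [hfact i]
  exact (hequiv i).some

end Aux

/-- For pairwise distinct primes `p₁, …, p_s`, the variety
`𝔏_{p₁,…,p_s} = var(N_{0,p₁}, …, N_{0,p_s})` is graph-determined. -/
theorem varNulls_graphDetermined (s : ℕ) (ps : Fin s → ℕ)
    (hprime : ∀ i, (ps i).Prime) (hdist : ∀ i j, i ≠ j → ps i ≠ ps j)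
    (R S : Type) [NonUnitalRing R] [NonUnitalRing S] (hR : Finite R) (hS : Finite S)
    (hmR : MemVarNulls s ps R) (hmS : MemVarNulls s ps S)
    (hiso : Nonempty (zdvGraph R ≃g zdvGraph S)) :
    Nonempty (R ≃+* S) := by
  classical
  obtain ⟨g⟩ := hiso
  obtain ⟨hR1, hR2⟩ := hmR (nullVariety (∏ i, ps i)) (fun i => nullring_mem s ps i)
  obtain ⟨hS1, hS2⟩ := hmS (nullVariety (∏ i, ps i)) (fun i => nullring_mem s ps i)
  -- every nonzero element is a zero-divisor, so the vertex sets count `card - 1`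
  have hZDR : ∀ x : R, IsZD x ↔ x ≠ 0 :=
    fun x => ⟨fun h => h.1, fun h => ⟨h, x, h, Or.inl (hR1 x x)⟩⟩
  have hZDS : ∀ x : S, IsZD x ↔ x ≠ 0 :=
    fun x => ⟨fun h => h.1, fun h => ⟨h, x, h, Or.inl (hS1 x x)⟩⟩
  haveI := Fintype.ofFinite R
  haveI := Fintype.ofFinite S
  have cR : Nat.card {x : R // IsZD x} = Nat.card R - 1 := by
    rw [Nat.card_congr (Equiv.subtypeEquivRight hZDR), Nat.card_eq_fintype_card,
      Nat.card_eq_fintype_card]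
    have h1 : Fintype.card {x : R // ¬ x = 0} = Fintype.card R - Fintype.card {x : R // x = 0} :=
      Fintype.card_subtype_compl _
    have h2 : Fintype.card {x : R // x = 0} = 1 := Fintype.card_subtype_eq (0 : R)
    simpa [h2] using h1
  have cS : Nat.card {x : S // IsZD x} = Nat.card S - 1 := by
    rw [Nat.card_congr (Equiv.subtypeEquivRight hZDS), Nat.card_eq_fintype_card,
      Nat.card_eq_fintype_card]
    have h1 : Fintype.card {x : S // ¬ x = 0} = Fintype.card S - Fintype.card {x : S // x = 0} :=
      Fintype.card_subtype_compl _
    have h2 : Fintype.card {x : S // x = 0} = 1 := Fintype.card_subtype_eq (0 : S)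
    simpa [h2] using h1
  have hv : Nat.card {x : R // IsZD x} = Nat.card {x : S // IsZD x} := Nat.card_congr g.toEquiv
  have hposR : 0 < Nat.card R := Nat.card_pos
  have hposS : 0 < Nat.card S := Nat.card_pos
  have hcard : Nat.card R = Nat.card S := by omega
  obtain ⟨eR⟩ := decomp s ps hprime hdist R hR2
  obtain ⟨eS⟩ := decomp s ps hprime hdist S hS2
  rw [hcard] at eR
  let e := eR.trans eS.symm
  refine ⟨{ e with map_mul' := ?_ }⟩
  intro x y
  show e (x * y) = e x * e y
  rw [hR1 x y, map_zero]
  exact (hS1 _ _).symm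
end

section
/- Let 𝔐 be a graph-determined variety of rings such that ℤ_p ∈ 𝔐 for some prime p. Then N_{p,p} does not belong to 𝔐. -/
/-- `N_{p,p}`: the ring of 3×3 matrices over `GF(p)` of the form
`[[0,a,b],[0,0,a],[0,0,0]]` with `a, b ∈ GF(p)`. -/
def Npp (p : ℕ) : NonUnitalSubring (Matrix (Fin 3) (Fin 3) (ZMod p)) where
  carrier := {M | M 0 0 = 0 ∧ M 1 0 = 0 ∧ M 1 1 = 0 ∧ M 2 0 = 0 ∧ M 2 1 = 0 ∧
    M 2 2 = 0 ∧ M 1 2 = M 0 1}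
  zero_mem' := ⟨rfl, rfl, rfl, rfl, rfl, rfl, rfl⟩
  add_mem' := by
    rintro M N ⟨h1, h2, h3, h4, h5, h6, h7⟩ ⟨g1, g2, g3, g4, g5, g6, g7⟩
    refine ⟨?_, ?_, ?_, ?_, ?_, ?_, ?_⟩ <;>
      simp [Matrix.add_apply, h1, h2, h3, h4, h5, h6, h7, g1, g2, g3, g4, g5, g6, g7]
  neg_mem' := by
    rintro M ⟨h1, h2, h3, h4, h5, h6, h7⟩
    refine ⟨?_, ?_, ?_, ?_, ?_, ?_, ?_⟩ <;>
      simp [Matrix.neg_apply, h1, h2, h3, h4, h5, h6, h7]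
  mul_mem' := by
    rintro M N ⟨h1, h2, h3, h4, h5, h6, h7⟩ ⟨g1, g2, g3, g4, g5, g6, g7⟩
    refine ⟨?_, ?_, ?_, ?_, ?_, ?_, ?_⟩ <;>
      simp [Matrix.mul_apply, Fin.sum_univ_three, h1, h2, h3, h4, h5, h6, h7,
        g1, g2, g3, g4, g5, g6, g7]
section Aux

variable {p : ℕ}

/-- The matrix `M(a,b)` generating `Npp`. -/
def matN (p : ℕ) (a b : ZMod p) : Matrix (Fin 3) (Fin 3) (ZMod p) :=
  ![![0, a, b], ![0, 0, a], ![0, 0, 0]]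

lemma matN_mem (a b : ZMod p) : matN p a b ∈ Npp p := by
  refine ⟨?_, ?_, ?_, ?_, ?_, ?_, ?_⟩ <;> simp [matN, Matrix.vecHead, Matrix.vecTail]

lemma matN_apply01 (a b : ZMod p) : matN p a b 0 1 = a := rfl
lemma matN_apply02 (a b : ZMod p) : matN p a b 0 2 = b := rfl

lemma npp_eq (x : Matrix (Fin 3) (Fin 3) (ZMod p)) (hx : x ∈ Npp p) :
    x = matN p (x 0 1) (x 0 2) := by
  obtain ⟨h1, h2, h3, h4, h5, h6, h7⟩ := hx
  ext i j
  fin_cases i <;> fin_cases j <;>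
    simp_all [matN, Matrix.vecHead, Matrix.vecTail]

lemma npp_mul_coe (x y : (Npp p)) :
    ((x * y : (Npp p)) : Matrix (Fin 3) (Fin 3) (ZMod p))
      = matN p 0 ((x : Matrix (Fin 3) (Fin 3) (ZMod p)) 0 1 *
          (y : Matrix (Fin 3) (Fin 3) (ZMod p)) 0 1) := by
  obtain ⟨x, h1, h2, h3, h4, h5, h6, h7⟩ := x
  obtain ⟨y, g1, g2, g3, g4, g5, g6, g7⟩ := y
  show x * y = _
  ext i j
  fin_cases i <;> fin_cases j <;>
    simp_all [matN, Matrix.vecHead, Matrix.vecTail, Matrix.mul_apply, Fin.sum_univ_three]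

lemma matN_eq_zero_iff (a b : ZMod p) : matN p a b = 0 ↔ a = 0 ∧ b = 0 := by
  constructor
  · intro h
    constructor
    · have := congrFun (congrFun h 0) 1; simpa [matN, Matrix.vecHead, Matrix.vecTail] using this
    · have := congrFun (congrFun h 0) 2; simpa [matN, Matrix.vecHead, Matrix.vecTail] using this
  · rintro ⟨rfl, rfl⟩
    ext i j
    fin_cases i <;> fin_cases j <;> simp [matN, Matrix.vecHead, Matrix.vecTail]

end Aux
section Aux2

/-- The Bool-indexed family `true ↦ NullRing (ZMod p)`, `false ↦ ZMod p`. -/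
def Fb (p : ℕ) : Bool → Type
  | true => NullRing (ZMod p)
  | false => ZMod p

instance instFbRing (p : ℕ) : ∀ b, NonUnitalRing (Fb p b)
  | true => inferInstanceAs (NonUnitalRing (NullRing (ZMod p)))
  | false => inferInstanceAs (NonUnitalRing (ZMod p))

/-- Build an element of the product ring from its two components
(`a` is the `ZMod p` component, `v` the null component). -/
def mk2 {p : ℕ} (a v : ZMod p) : ∀ b, Fb p b
  | true => (v : NullRing (ZMod p))
  | false => a

variable {p : ℕ}

lemma mk2_false (a v : ZMod p) : mk2 a v false = a := rfl
lemma mk2_true (a v : ZMod p) : mk2 (p := p) a v true = (v : NullRing (ZMod p)) := rfl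

lemma sring_eq (x : ∀ b, Fb p b) : x = mk2 (x false) (x true) := by
  funext b; cases b <;> rfl

lemma mk2_inj {a v a' v' : ZMod p} (h : mk2 (p := p) a v = mk2 a' v') : a = a' ∧ v = v' :=
  ⟨congrFun h false, congrFun h true⟩

lemma sring_mul (x y : ∀ b, Fb p b) : x * y = mk2 (x false * y false) 0 := by
  funext b; cases b
  · rfl
  · show (x true) * (y true) = (0 : NullRing (ZMod p))
    rfl

lemma mk2_eq_zero_iff {a v : ZMod p} : mk2 (p := p) a v = 0 ↔ a = 0 ∧ v = 0 := by
  constructor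
  · intro h; exact ⟨congrFun h false, congrFun h true⟩
  · rintro ⟨rfl, rfl⟩; funext b; cases b <;> rfl

end Aux2
section Aux3

variable {p : ℕ} [Fact p.Prime]

lemma npp_mul_eq_zero_iff (x y : (Npp p)) :
    x * y = 0 ↔ (x : Matrix (Fin 3) (Fin 3) (ZMod p)) 0 1 = 0 ∨
      (y : Matrix (Fin 3) (Fin 3) (ZMod p)) 0 1 = 0 := by
  rw [Subtype.ext_iff, ZeroMemClass.coe_zero, npp_mul_coe, matN_eq_zero_iff,
    ← mul_eq_zero]
  simp

lemma npp_ne_zero_iff (x : (Npp p)) :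
    x ≠ 0 ↔ ¬((x : Matrix (Fin 3) (Fin 3) (ZMod p)) 0 1 = 0 ∧
      (x : Matrix (Fin 3) (Fin 3) (ZMod p)) 0 2 = 0) := by
  rw [Ne, Subtype.ext_iff, ZeroMemClass.coe_zero]
  constructor
  · intro h hc
    apply h
    rw [npp_eq x.1 x.2, hc.1, hc.2]
    exact (matN_eq_zero_iff 0 0).2 ⟨rfl, rfl⟩
  · intro h hc
    exact h ⟨by rw [hc]; rfl, by rw [hc]; rfl⟩

lemma isZD_npp (x : (Npp p)) : IsZD x ↔ x ≠ 0 := by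
  refine ⟨fun h => h.1, fun h => ⟨h, ⟨matN p 0 1, matN_mem 0 1⟩, ?_, Or.inl ?_⟩⟩
  · rw [npp_ne_zero_iff]
    exact fun hc => one_ne_zero hc.2
  · rw [npp_mul_eq_zero_iff]
    exact Or.inr rfl

lemma sring_mul_eq_zero_iff (x y : ∀ b, Fb p b) :
    x * y = 0 ↔ x false = 0 ∨ y false = 0 := by
  haveI : NoZeroDivisors (Fb p false) := inferInstanceAs (NoZeroDivisors (ZMod p))
  rw [sring_mul, show (0 : ∀ b, Fb p b) = mk2 0 0 from (mk2_eq_zero_iff.2 ⟨rfl, rfl⟩).symm]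
  constructor
  · intro h
    exact mul_eq_zero.1 (mk2_inj h).1
  · intro h
    rw [mul_eq_zero.2 h]
    rfl

omit [Fact p.Prime] in
lemma sring_ne_zero_iff (x : ∀ b, Fb p b) :
    x ≠ 0 ↔ ¬(x false = 0 ∧ (x true : ZMod p) = 0) := by
  constructor
  · intro h hc
    apply h
    rw [sring_eq x]
    exact mk2_eq_zero_iff.2 hc
  · intro h hc
    rw [hc] at h
    exact h ⟨rfl, rfl⟩

lemma isZD_sring (x : ∀ b, Fb p b) : IsZD x ↔ x ≠ 0 := by
  refine ⟨fun h => h.1, fun h => ⟨h, mk2 0 1, ?_, Or.inl ?_⟩⟩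
  · rw [Ne, mk2_eq_zero_iff]
    exact fun hc => one_ne_zero hc.2
  · exact (sring_mul_eq_zero_iff _ _).2 (Or.inr rfl)

lemma npp_cube (x : (Npp p)) : x * x * x = 0 := by
  rw [npp_mul_eq_zero_iff]
  left
  rw [npp_mul_coe, matN_apply01]

lemma adj_npp (x y : {x : (Npp p) // IsZD x}) :
    (zdvGraph (Npp p)).Adj x y ↔ x ≠ y ∧
      ((x.1 : Matrix (Fin 3) (Fin 3) (ZMod p)) 0 1 = 0 ∨
       (y.1 : Matrix (Fin 3) (Fin 3) (ZMod p)) 0 1 = 0) := by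
  show x ≠ y ∧ _ ↔ _
  rw [npp_mul_eq_zero_iff, npp_mul_eq_zero_iff]
  tauto

lemma adj_sring (x y : {x : ∀ b, Fb p b // IsZD x}) :
    (zdvGraph (∀ b, Fb p b)).Adj x y ↔ x ≠ y ∧ (x.1 false = 0 ∨ y.1 false = 0) := by
  show x ≠ y ∧ _ ↔ _
  rw [sring_mul_eq_zero_iff, sring_mul_eq_zero_iff]
  tauto

/-- The underlying bijection of vertices. -/
def zdvEquivAux :
    {x : (Npp p) // IsZD x} ≃ {x : ∀ b, Fb p b // IsZD x} where
  toFun x := ⟨mk2 ((x.1 : Matrix (Fin 3) (Fin 3) (ZMod p)) 0 1)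
      ((x.1 : Matrix (Fin 3) (Fin 3) (ZMod p)) 0 2),
    (isZD_sring _).2 (by
      rw [sring_ne_zero_iff, mk2_false, mk2_true]
      exact (npp_ne_zero_iff x.1).1 ((isZD_npp x.1).1 x.2))⟩
  invFun s := ⟨⟨matN p (s.1 false) (s.1 true), matN_mem _ _⟩,
    (isZD_npp _).2 (by
      rw [npp_ne_zero_iff]
      exact fun hc => (sring_ne_zero_iff s.1).1 ((isZD_sring s.1).1 s.2) ⟨hc.1, hc.2⟩)⟩
  left_inv x := Subtype.ext (Subtype.ext (npp_eq x.1.1 x.1.2).symm)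
  right_inv s := Subtype.ext (sring_eq s.1).symm

/-- The graph isomorphism `Γ(N_{p,p}) ≅ Γ(NullRing(ℤ_p) × ℤ_p)`. -/
def zdvEquiv : zdvGraph (Npp p) ≃g zdvGraph (∀ b, Fb p b) where
  toEquiv := zdvEquivAux
  map_rel_iff' := by
    intro a b
    rw [adj_sring, adj_npp]
    exact and_congr zdvEquivAux.injective.ne_iff Iff.rfl

end Aux3

/-- If `𝔐` is a graph-determined variety containing `ℤ_p` (`p` prime), then `N_{p,p}`
does not belong to `𝔐`. -/
theorem Npp_not_mem_graphDetermined (M : RingVariety) (hgd : GraphDetermined M)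
    (p : ℕ) (hp : p.Prime) (hZp : M.mem (ZMod p)) :
    ¬ M.mem (Npp p) := by
  haveI := Fact.mk hp
  haveI : NeZero p := ⟨hp.ne_zero⟩
  intro hN
  -- the null ring on `ZMod p` is a homomorphic image of `Npp p`
  have hNull : M.mem (NullRing (ZMod p)) := by
    refine M.closed_image (Npp p) (NullRing (ZMod p))
      { toFun := fun x => ((x : Matrix (Fin 3) (Fin 3) (ZMod p)) 0 1 : NullRing (ZMod p))
        map_zero' := rfl
        map_add' := fun x y => rfl
        map_mul' := fun x y => ?_ } ?_ hN
    · show ((x * y : (Npp p)) : Matrix (Fin 3) (Fin 3) (ZMod p)) 0 1 = _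
      rw [npp_mul_coe, matN_apply01]
      rfl
    · intro a
      exact ⟨⟨matN p a 0, matN_mem a 0⟩, rfl⟩
  -- hence the product ring `∀ b, Fb p b ≅ NullRing (ZMod p) × ZMod p` is in `M`
  have hS : M.mem (∀ b, Fb p b) := by
    refine M.closed_prod Bool (Fb p) ?_
    intro b
    cases b
    · exact hZp
    · exact hNull
  haveI : ∀ b, Finite (Fb p b) := fun b => by
    cases b
    · exact inferInstanceAs (Finite (ZMod p))
    · exact inferInstanceAs (Finite (ZMod p))
  obtain ⟨φ⟩ := hgd (Npp p) (∀ b, Fb p b) inferInstance inferInstance hN hS ⟨zdvEquiv⟩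
  -- transport the idempotent-like element and contradict nilpotency of `Npp p`
  set s1 : ∀ b, Fb p b := mk2 1 0 with hs1
  have hcube : s1 * s1 * s1 = s1 := by
    funext b
    cases b
    · show ((1 : ZMod p) * 1) * 1 = 1
      rw [one_mul, one_mul]
    · rfl
  have h1 : φ.symm s1 * φ.symm s1 * φ.symm s1 = 0 := npp_cube _
  have h2 := congrArg φ h1
  rw [map_mul, map_mul, map_zero, φ.apply_symm_apply, hcube] at h2
  exact one_ne_zero (mk2_eq_zero_iff.1 h2).1
end
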